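/- Any Hermitian projector Π of rank q with non-negative entries in the standard basis can be written as Π = Σ_{a=1}^q |ψ_a⟩⟨ψ_a| where the ψ_a are pairwise orthonormal unit vectors with non-negative real entries supported on pairwise disjoint sets of basis indices. -/

import Mathlib

noncomputable section
namespace Stmt4Aux
open Finset

variable {N : ℕ}

def RM (P : Matrix (Fin N) (Fin N) ℂ) : Fin N → Fin N → ℝ := fun x y => (P x y).re

def rep (P : Matrix (Fin N) (Fin N) ℂ) : Fin N → Fin N := fun x =>
  if h : 0 < RM P x x then
    (Finset.univ.filter fun z => 0 < RM P x z).min'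
      ⟨x, by simp [h]⟩
  else x

def reps (P : Matrix (Fin N) (Fin N) ℂ) : Finset (Fin N) :=
  (Finset.univ.filter fun x => 0 < RM P x x).image (rep P)

def vcol (P : Matrix (Fin N) (Fin N) ℂ) (r : Fin N) : Fin N → ℝ :=
  fun z => RM P z r / Real.sqrt (RM P r r)

end Stmt4Aux

namespace Stmt4Aux
variable {N : ℕ} {P : Matrix (Fin N) (Fin N) ℂ}

lemma hP (hnonneg : ∀ x y, (P x y).im = 0 ∧ 0 ≤ (P x y).re) (x y : Fin N) :
    P x y = (RM P x y : ℂ) := by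
  apply Complex.ext <;> simp [RM, (hnonneg x y).1]

lemma nnRM (hnonneg : ∀ x y, (P x y).im = 0 ∧ 0 ≤ (P x y).re) (x y : Fin N) :
    0 ≤ RM P x y := (hnonneg x y).2

lemma symmRM (hherm : P.IsHermitian) (x y : Fin N) : RM P x y = RM P y x := by
  unfold RM
  rw [← hherm.apply x y]
  simp

lemma mulRM (hproj : P * P = P) (hnonneg : ∀ x y, (P x y).im = 0 ∧ 0 ≤ (P x y).re)
    (x y : Fin N) : RM P x y = ∑ z, RM P x z * RM P z y := by
  have h := congrFun (congrFun hproj x) y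
  rw [Matrix.mul_apply] at h
  have : ((∑ z, RM P x z * RM P z y : ℝ) : ℂ) = ((RM P x y : ℝ) : ℂ) := by
    rw [← hP hnonneg x y, ← h]
    push_cast
    refine Finset.sum_congr rfl fun z _ => ?_
    rw [hP hnonneg x z, hP hnonneg z y]
  exact_mod_cast this.symm

end Stmt4Aux

namespace Stmt4Aux
variable {N : ℕ} {P : Matrix (Fin N) (Fin N) ℂ}

lemma diag_pos (hherm : P.IsHermitian) (hproj : P * P = P)
    (hnonneg : ∀ x y, (P x y).im = 0 ∧ 0 ≤ (P x y).re)
    {x y : Fin N} (hne : RM P x y ≠ 0) : 0 < RM P x x := by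
  have hsq : 0 < RM P x y * RM P y x := by
    rw [← symmRM hherm x y]
    have h := (nnRM hnonneg x y).lt_of_ne (Ne.symm hne)
    exact mul_pos h h
  have hle : RM P x y * RM P y x ≤ ∑ z, RM P x z * RM P z x :=
    Finset.single_le_sum
      (fun z _ => mul_nonneg (nnRM hnonneg x z) (nnRM hnonneg z x)) (Finset.mem_univ y)
  rw [mulRM hproj hnonneg x x]
  exact lt_of_lt_of_le hsq hle

lemma transRM (hproj : P * P = P) (hnonneg : ∀ x y, (P x y).im = 0 ∧ 0 ≤ (P x y).re)
    {x y z : Fin N} (h1 : 0 < RM P x y) (h2 : 0 < RM P y z) : 0 < RM P x z := by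
  rw [mulRM hproj hnonneg x z]
  have hle : RM P x y * RM P y z ≤ ∑ w, RM P x w * RM P w z :=
    Finset.single_le_sum
      (fun w _ => mul_nonneg (nnRM hnonneg x w) (nnRM hnonneg w z)) (Finset.mem_univ y)
  exact lt_of_lt_of_le (mul_pos h1 h2) hle

lemma propRM (hherm : P.IsHermitian) (hproj : P * P = P)
    (hnonneg : ∀ x y, (P x y).im = 0 ∧ 0 ≤ (P x y).re)
    {x y : Fin N} (hxy : 0 < RM P x y) (z : Fin N) :
    RM P z y * RM P x x = RM P z x * RM P x y := by
  classical
  have hxx : 0 < RM P x x := diag_pos hherm hproj hnonneg (ne_of_gt hxy)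
  set C : Finset (Fin N) := Finset.univ.filter (fun w => 0 < RM P x w) with hC
  have hxC : x ∈ C := by simp [hC, hxx]
  obtain ⟨z₀, hz₀C, hz₀min⟩ := Finset.exists_min_image C (fun w => RM P w y / RM P w x) ⟨x, hxC⟩
  have hmemC : ∀ {w}, w ∈ C → 0 < RM P w x := by
    intro w hw
    rw [symmRM hherm w x]
    simpa [hC] using hw
  have hnotC : ∀ {w}, w ∉ C → RM P w x = 0 ∧ RM P w y = 0 := by
    intro w hw
    have h1 : ¬ 0 < RM P x w := by simpa [hC] using hw
    have hzx : RM P w x = 0 := by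
      rw [symmRM hherm w x]
      exact le_antisymm (not_lt.1 h1) (nnRM hnonneg x w)
    refine ⟨hzx, ?_⟩
    by_contra h
    have hzy : 0 < RM P w y := (nnRM hnonneg w y).lt_of_ne (Ne.symm h)
    have hyx : 0 < RM P y x := by rw [symmRM hherm y x]; exact hxy
    have hwx : 0 < RM P w x := transRM hproj hnonneg hzy hyx
    exact absurd hwx (by simp [hzx])
  set t := RM P z₀ y / RM P z₀ x with ht
  have hz₀x : 0 < RM P z₀ x := hmemC hz₀C
  have hw_nonneg : ∀ w, 0 ≤ RM P w y - t * RM P w x := by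
    intro w
    by_cases hw : w ∈ C
    · have hwx := hmemC hw
      have hmin : t ≤ RM P w y / RM P w x := hz₀min w hw
      have := (le_div_iff₀ hwx).1 hmin
      linarith
    · obtain ⟨h1, h2⟩ := hnotC hw
      simp [h1, h2]
  have hfix : ∀ w, RM P w y - t * RM P w x = ∑ u, RM P w u * (RM P u y - t * RM P u x) := by
    intro w
    calc RM P w y - t * RM P w x
        = (∑ u, RM P w u * RM P u y) - t * ∑ u, RM P w u * RM P u x := by
          rw [← mulRM hproj hnonneg w y, ← mulRM hproj hnonneg w x]
      _ = ∑ u, (RM P w u * RM P u y - t * (RM P w u * RM P u x)) := by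
          rw [Finset.mul_sum, Finset.sum_sub_distrib]
      _ = ∑ u, RM P w u * (RM P u y - t * RM P u x) := by
          refine Finset.sum_congr rfl fun u _ => by ring
  have hz₀0 : RM P z₀ y - t * RM P z₀ x = 0 := by
    rw [ht]
    field_simp
    ring
  have hall0 : ∀ w, RM P w y - t * RM P w x = 0 := by
    have hsum : ∑ u, RM P z₀ u * (RM P u y - t * RM P u x) = 0 := by rw [← hfix z₀, hz₀0]
    have hterm := (Finset.sum_eq_zero_iff_of_nonneg
      (fun u _ => mul_nonneg (nnRM hnonneg z₀ u) (hw_nonneg u))).1 hsum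
    intro w
    by_cases hw : w ∈ C
    · have hxw : 0 < RM P x w := by simpa [hC] using hw
      have hpos : 0 < RM P z₀ w := transRM hproj hnonneg hz₀x hxw
      rcases mul_eq_zero.1 (hterm w (Finset.mem_univ w)) with h | h
      · exact absurd h (ne_of_gt hpos)
      · exact h
    · obtain ⟨h1, h2⟩ := hnotC hw
      simp [h1, h2]
  have e1 : RM P z y = t * RM P z x := by have := hall0 z; linarith
  have e2 : RM P x y = t * RM P x x := by have := hall0 x; linarith
  rw [e1, e2]
  ring

end Stmt4Aux

namespace Stmt4Aux
variable {N : ℕ} {P : Matrix (Fin N) (Fin N) ℂ}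

lemma rep_mem {x : Fin N} (hx : 0 < RM P x x) : 0 < RM P x (rep P x) := by
  have h : rep P x = (Finset.univ.filter fun z => 0 < RM P x z).min'
      ⟨x, by simp [hx]⟩ := by
    unfold rep
    rw [dif_pos hx]
  rw [h]
  have := Finset.min'_mem (Finset.univ.filter fun z => 0 < RM P x z)
    ⟨x, by simp [hx]⟩
  simpa using this

lemma rep_class (hherm : P.IsHermitian) (hproj : P * P = P)
    (hnonneg : ∀ x y, (P x y).im = 0 ∧ 0 ≤ (P x y).re)
    {x y : Fin N} (hxy : 0 < RM P x y) : rep P x = rep P y := by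
  have hx : 0 < RM P x x := diag_pos hherm hproj hnonneg (ne_of_gt hxy)
  have hyx : 0 < RM P y x := by rw [symmRM hherm y x]; exact hxy
  have hy : 0 < RM P y y := diag_pos hherm hproj hnonneg (ne_of_gt hyx)
  have hsets : (Finset.univ.filter fun z => 0 < RM P x z)
      = (Finset.univ.filter fun z => 0 < RM P y z) := by
    ext w
    simp only [Finset.mem_filter, Finset.mem_univ, true_and]
    exact ⟨fun h => transRM hproj hnonneg hyx h, fun h => transRM hproj hnonneg hxy h⟩
  unfold rep
  rw [dif_pos hx, dif_pos hy]
  apply le_antisymm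
  · exact Finset.min'_le _ _ (by rw [hsets]; exact Finset.min'_mem _ _)
  · exact Finset.min'_le _ _ (by rw [← hsets]; exact Finset.min'_mem _ _)

lemma rep_fix (hherm : P.IsHermitian) (hproj : P * P = P)
    (hnonneg : ∀ x y, (P x y).im = 0 ∧ 0 ≤ (P x y).re)
    {r : Fin N} (hr : r ∈ reps P) : rep P r = r ∧ 0 < RM P r r := by
  obtain ⟨x, hx, rfl⟩ := Finset.mem_image.1 hr
  have hx' : 0 < RM P x x := by simpa using (Finset.mem_filter.1 hx).2
  have h1 : 0 < RM P x (rep P x) := rep_mem hx'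
  have h2 : 0 < RM P (rep P x) x := by rw [symmRM hherm]; exact h1
  refine ⟨(rep_class hherm hproj hnonneg h1).symm, ?_⟩
  exact diag_pos hherm hproj hnonneg (ne_of_gt h2)

lemma disjRM (hherm : P.IsHermitian) (hproj : P * P = P)
    (hnonneg : ∀ x y, (P x y).im = 0 ∧ 0 ≤ (P x y).re)
    {r s : Fin N} (hr : r ∈ reps P) (hs : s ∈ reps P) (hne : r ≠ s)
    (z : Fin N) : RM P z r = 0 ∨ RM P z s = 0 := by
  by_contra h
  push_neg at h
  have h1 : 0 < RM P z r := (nnRM hnonneg z r).lt_of_ne (Ne.symm h.1)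
  have h2 : 0 < RM P z s := (nnRM hnonneg z s).lt_of_ne (Ne.symm h.2)
  have e1 : rep P z = r := (rep_class hherm hproj hnonneg h1).trans
    (rep_fix hherm hproj hnonneg hr).1
  have e2 : rep P z = s := (rep_class hherm hproj hnonneg h2).trans
    (rep_fix hherm hproj hnonneg hs).1
  exact hne (e1.symm.trans e2)

end Stmt4Aux

namespace Stmt4Aux
variable {N : ℕ} {P : Matrix (Fin N) (Fin N) ℂ}

lemma onbRM (hherm : P.IsHermitian) (hproj : P * P = P)
    (hnonneg : ∀ x y, (P x y).im = 0 ∧ 0 ≤ (P x y).re)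
    {r s : Fin N} (hr : r ∈ reps P) (hs : s ∈ reps P) :
    ∑ z, vcol P r z * vcol P s z = if r = s then 1 else 0 := by
  by_cases h : r = s
  · subst h
    rw [if_pos rfl]
    have hrr : 0 < RM P r r := (rep_fix hherm hproj hnonneg hr).2
    have hsum : ∑ z, RM P z r * RM P z r = RM P r r := by
      rw [mulRM hproj hnonneg r r]
      exact Finset.sum_congr rfl fun z _ => by rw [symmRM hherm z r]
    have hs2 : Real.sqrt (RM P r r) * Real.sqrt (RM P r r) = RM P r r :=
      Real.mul_self_sqrt hrr.le
    have hterm : ∀ z, vcol P r z * vcol P r z = RM P z r * RM P z r / RM P r r := by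
      intro z
      unfold vcol
      rw [div_mul_div_comm, hs2]
    rw [Finset.sum_congr rfl fun z _ => hterm z, ← Finset.sum_div, hsum,
      div_self (ne_of_gt hrr)]
  · rw [if_neg h]
    apply Finset.sum_eq_zero
    intro z _
    rcases disjRM hherm hproj hnonneg hr hs h z with h0 | h0 <;> simp [vcol, h0]

lemma decompRM (hherm : P.IsHermitian) (hproj : P * P = P)
    (hnonneg : ∀ x y, (P x y).im = 0 ∧ 0 ≤ (P x y).re)
    (z w : Fin N) :
    RM P z w = ∑ r ∈ reps P, vcol P r z * vcol P r w := by
  classical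
  by_cases hzw : 0 < RM P z w
  · have hzz : 0 < RM P z z := diag_pos hherm hproj hnonneg (ne_of_gt hzw)
    have hzr : 0 < RM P z (rep P z) := rep_mem hzz
    set r := rep P z with hrdef
    have hrz : 0 < RM P r z := by rw [symmRM hherm]; exact hzr
    have hrreps : r ∈ reps P :=
      Finset.mem_image.2 ⟨z, Finset.mem_filter.2 ⟨Finset.mem_univ z, hzz⟩, rfl⟩
    have hrw : 0 < RM P r w := transRM hproj hnonneg hrz hzw
    have hrr : 0 < RM P r r := diag_pos hherm hproj hnonneg (ne_of_gt hrz)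
    rw [Finset.sum_eq_single_of_mem r hrreps]
    · unfold vcol
      rw [div_mul_div_comm, Real.mul_self_sqrt hrr.le, eq_div_iff (ne_of_gt hrr),
        symmRM hherm w r]
      exact propRM hherm hproj hnonneg hrw z
    · intro s hsmem hne
      rcases disjRM hherm hproj hnonneg hrreps hsmem (Ne.symm hne) z with h0 | h0
      · exact absurd h0 (ne_of_gt hzr)
      · simp [vcol, h0]
  · have hzw0 : RM P z w = 0 := le_antisymm (not_lt.1 hzw) (nnRM hnonneg z w)
    rw [hzw0]
    symm
    apply Finset.sum_eq_zero
    intro s _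
    by_contra h
    have hz2 : RM P z s ≠ 0 := fun e => (left_ne_zero_of_mul h) (by simp [vcol, e])
    have hw2 : RM P w s ≠ 0 := fun e => (right_ne_zero_of_mul h) (by simp [vcol, e])
    have hz3 : 0 < RM P z s := (nnRM hnonneg z s).lt_of_ne (Ne.symm hz2)
    have hsw : 0 < RM P s w := by
      rw [symmRM hherm]
      exact (nnRM hnonneg w s).lt_of_ne (Ne.symm hw2)
    exact absurd (transRM hproj hnonneg hz3 hsw) (by simp [hzw0])

end Stmt4Aux

namespace Stmt4Aux
open scoped Matrix ComplexOrder
variable {N q : ℕ} {P : Matrix (Fin N) (Fin N) ℂ}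

lemma cardRM (hherm : P.IsHermitian) (hproj : P * P = P)
    (hnonneg : ∀ x y, (P x y).im = 0 ∧ 0 ≤ (P x y).re)
    (hrank : P.rank = q) : (reps P).card = q := by
  classical
  set Ψ : Matrix (Fin N) (reps P) ℂ := Matrix.of fun z r => ((vcol P r.1 z : ℝ) : ℂ) with hΨ
  have hterm : ∀ (z : Fin N) (r s : reps P),
      star ((vcol P r.1 z : ℝ) : ℂ) * ((vcol P s.1 z : ℝ) : ℂ)
        = ((vcol P r.1 z * vcol P s.1 z : ℝ) : ℂ) := by
    intro z r s
    rw [Complex.star_def, Complex.conj_ofReal]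
    push_cast
    ring
  have hΨ1 : Ψᴴ * Ψ = 1 := by
    ext r s
    rw [Matrix.mul_apply, Matrix.one_apply]
    simp only [hΨ, Matrix.conjTranspose_apply, Matrix.of_apply]
    rw [Finset.sum_congr rfl fun z _ => hterm z r s, ← Complex.ofReal_sum,
      onbRM hherm hproj hnonneg r.2 s.2]
    by_cases h : r = s
    · simp [h]
    · have h' : r.1 ≠ s.1 := fun e => h (Subtype.ext e)
      simp [h, h']
  have hΨ2 : P = Ψ * Ψᴴ := by
    ext z w
    rw [Matrix.mul_apply, hP hnonneg z w]
    simp only [hΨ, Matrix.conjTranspose_apply, Matrix.of_apply]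
    have : ∀ r : reps P, ((vcol P r.1 z : ℝ) : ℂ) * star ((vcol P r.1 w : ℝ) : ℂ)
        = ((vcol P r.1 z * vcol P r.1 w : ℝ) : ℂ) := by
      intro r
      rw [Complex.star_def, Complex.conj_ofReal]
      push_cast
      ring
    rw [Finset.sum_congr rfl fun r _ => this r, ← Complex.ofReal_sum,
      decompRM hherm hproj hnonneg z w]
    norm_cast
    exact (Finset.sum_coe_sort (reps P) fun r => vcol P r z * vcol P r w).symm
  have h1 : P.rank = Ψ.rank := by
    conv_lhs => rw [hΨ2]
    exact Matrix.rank_self_mul_conjTranspose Ψ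
  have h2 : Ψ.rank = (reps P).card := by
    rw [← Matrix.rank_conjTranspose_mul_self, hΨ1, Matrix.rank_one, Fintype.card_coe]
  rw [← hrank, h1, h2]

end Stmt4Aux

open Stmt4Aux in
theorem stmt_4' {N q : ℕ} (P : Matrix (Fin N) (Fin N) ℂ)
    (hherm : P.IsHermitian) (hproj : P * P = P)
    (hnonneg : ∀ x y, (P x y).im = 0 ∧ 0 ≤ (P x y).re)
    (hrank : P.rank = q) :
    ∃ ψ : Fin q → (Fin N → ℂ),
      (∀ a x, ((ψ a) x).im = 0 ∧ 0 ≤ ((ψ a) x).re) ∧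
      (∀ a b, ∑ x, (starRingEnd ℂ) (ψ a x) * ψ b x = if a = b then 1 else 0) ∧
      (∀ a b, a ≠ b → ∀ x, ψ a x = 0 ∨ ψ b x = 0) ∧
      P = ∑ a, Matrix.vecMulVec (ψ a) (fun x => (starRingEnd ℂ) (ψ a x)) := by
  classical
  have hcard := cardRM hherm hproj hnonneg hrank
  let e : Fin q ≃ {x // x ∈ reps P} := (Finset.equivFinOfCardEq hcard).symm
  refine ⟨fun a z => ((vcol P (e a).1 z : ℝ) : ℂ), ?_, ?_, ?_, ?_⟩
  · intro a x
    refine ⟨by simp, ?_⟩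
    simp only [Complex.ofReal_re]
    exact div_nonneg (nnRM hnonneg _ _) (Real.sqrt_nonneg _)
  · intro a b
    have h := onbRM hherm hproj hnonneg (e a).2 (e b).2
    have hconj : ∀ x, (starRingEnd ℂ) ((vcol P (e a).1 x : ℝ) : ℂ) * ((vcol P (e b).1 x : ℝ) : ℂ)
        = ((vcol P (e a).1 x * vcol P (e b).1 x : ℝ) : ℂ) := by
      intro x
      rw [Complex.conj_ofReal]
      push_cast
      ring
    rw [Finset.sum_congr rfl fun x _ => hconj x, ← Complex.ofReal_sum, h]
    by_cases hab : a = b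
    · simp [hab]
    · have h' : (e a).1 ≠ (e b).1 := fun hh => hab (e.injective (Subtype.ext hh))
      simp [hab, h']
  · intro a b hab x
    have hne : (e a).1 ≠ (e b).1 := fun hh => hab (e.injective (Subtype.ext hh))
    rcases disjRM hherm hproj hnonneg (e a).2 (e b).2 hne x with h0 | h0
    · left; simp [vcol, h0]
    · right; simp [vcol, h0]
  · ext z w
    rw [Matrix.sum_apply]
    simp only [Matrix.vecMulVec_apply]
    rw [hP hnonneg z w, decompRM hherm hproj hnonneg z w]
    have hterm : ∀ a : Fin q,
        ((vcol P (e a).1 z : ℝ) : ℂ) * (starRingEnd ℂ) ((vcol P (e a).1 w : ℝ) : ℂ)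
          = ((vcol P (e a).1 z * vcol P (e a).1 w : ℝ) : ℂ) := by
      intro a
      rw [Complex.conj_ofReal]
      push_cast
      ring
    rw [Finset.sum_congr rfl fun a _ => hterm a, ← Complex.ofReal_sum]
    norm_cast
    rw [← Finset.sum_coe_sort (reps P) (fun r => vcol P r z * vcol P r w)]
    exact (Equiv.sum_comp e (fun r => vcol P r.1 z * vcol P r.1 w)).symm



/-- Any Hermitian projector `P` of rank `q` with non-negative entries
decomposes as `P = ∑_{a} |ψ_a⟩⟨ψ_a|` where the `ψ_a` are orthonormal vectors with
real non-negative entries supported on pairwise disjoint sets of basis indices. -/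
theorem stmt_4 {N q : ℕ} (P : Matrix (Fin N) (Fin N) ℂ)
    (hherm : P.IsHermitian) (hproj : P * P = P)
    (hnonneg : ∀ x y, (P x y).im = 0 ∧ 0 ≤ (P x y).re)
    (hrank : P.rank = q) :
    ∃ ψ : Fin q → (Fin N → ℂ),
      (∀ a x, ((ψ a) x).im = 0 ∧ 0 ≤ ((ψ a) x).re) ∧
      (∀ a b, ∑ x, (starRingEnd ℂ) (ψ a x) * ψ b x = if a = b then 1 else 0) ∧
      (∀ a b, a ≠ b → ∀ x, ψ a x = 0 ∨ ψ b x = 0) ∧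
      P = ∑ a, Matrix.vecMulVec (ψ a) (fun x => (starRingEnd ℂ) (ψ a x)) := by
  exact stmt_4' P hherm hproj hnonneg hrank
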